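/- For n = 3, the solution ω_1(p) of the system ω_1 = (1-α_1)·2 + α_1·ω_2, ω_2 = (1-α_2)η_2 + α_2·0, η_2 = (1-β_2)·(3/2)·2 + β_2·(3/2)·ω_2, where α_1 = (p/3 - 2)/(p/3 - 1), α_2 = (p/3 - 3)/(p/3 - 2), β_2 = (2p/3)/(3(p/3 - 1)), equals ω_1(p) = (9/(p-3))·(1 + (12-p)/(p² - 12p + 18)). Consequently ω_1(p) > 1 for p < 12 sufficiently close to 12. -/

import Mathlib

/-- The `n = 3` case of the appendix system: the solution satisfies
`ω₁(p) = (9/(p-3))(1 + (12-p)/(p²-12p+18))`, and `ω₁(p) > 1` for `p < 12`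
sufficiently close to `12`. -/
theorem omega_one_formula_dim_three :
    ∃ p0 : ℝ, 9 ≤ p0 ∧ p0 < 12 ∧ ∀ p ω1 ω2 η2 : ℝ, p0 < p → p < 12 →
      (ω1 = (1 - (p / 3 - 2) / (p / 3 - 1)) * 2 + ((p / 3 - 2) / (p / 3 - 1)) * ω2 ∧
       ω2 = (1 - (p / 3 - 3) / (p / 3 - 2)) * η2 + ((p / 3 - 3) / (p / 3 - 2)) * 0 ∧
       η2 = (1 - (2 * p / 3) / (3 * (p / 3 - 1))) * (3 / 2) * 2
            + ((2 * p / 3) / (3 * (p / 3 - 1))) * (3 / 2) * ω2) →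
      ω1 = (9 / (p - 3)) * (1 + (12 - p) / (p ^ 2 - 12 * p + 18)) ∧ 1 < ω1 := by
  refine ⟨11, by norm_num, by norm_num, ?_⟩
  intro p ω1 ω2 η2 hp11 hp12 ⟨h1, h2, h3⟩
  have hq : p ^ 2 - 12 * p + 18 > 0 := by nlinarith
  have hq' : p ^ 2 - 12 * p + 18 ≠ 0 := ne_of_gt hq
  have hd1 : p / 3 - 1 ≠ 0 := by intro h; nlinarith [h]
  have hd2 : p / 3 - 2 ≠ 0 := by intro h; nlinarith [h]
  have hd3 : p - 3 ≠ 0 := by intro h; nlinarith [h]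
  have hd2' : p - 6 ≠ 0 := by intro h; nlinarith [h]
  field_simp at h1 h2 h3
  have h2' : ω2 * (p - 6) = 3 * η2 := by
    have e : (p - 3 * 3) / (p - 3 * 2) = (p - 9) / (p - 6) := by norm_num
    have e6 : p - 3 * 2 = p - 6 := by ring
    rw [h2, e6]; field_simp; ring
  have hω2 : ω2 * (p ^ 2 - 12 * p + 18) = 3 * (p - 9) := by
    linear_combination (p - 3) * h2' + 3 * h3
  have hω1 : ω1 * ((p - 3) * (p ^ 2 - 12 * p + 18)) = 9 * (p - 10) * (p - 3) := by
    linear_combination (p ^ 2 - 12 * p + 18) * h1 + (p - 6) * hω2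
  constructor
  · field_simp
    have hq2 : p * (p - 12) + 18 ≠ 0 := fun h => hq' (by linear_combination h)
    field_simp
    linear_combination hω1
  · have key : ω1 * (p ^ 2 - 12 * p + 18) = 9 * (p - 10) := by
      apply mul_right_cancel₀ hd3
      linear_combination hω1
    nlinarith [key, hq]
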